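/- Continued normal form in SL₂(ℤ): for every matrix A ∈ SL₂(ℤ) there exist a sign ε ∈ {+1, −1} and an integer M such that one of the following holds: (i) A = ε · σ₁^M; (ii) A = ε · σ₁ · σ₂ · σ₁^M; or (iii) A = ε · β(a, 1) · σ₁^M for some even continued form a. (Here σ₁ = σ₁(1) and σ₂ = σ₂(1).) -/

import Mathlib

open Matrix

/-- The generator σ₁ = σ₁(1) = [[1, −1], [0, 1]] of SL₂(ℤ). -/
def S1 : Matrix (Fin 2) (Fin 2) ℤ := !![1, -1; 0, 1]

/-- The generator σ₂ = σ₂(1) = [[1, 0], [1, 1]] of SL₂(ℤ). -/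
def S2 : Matrix (Fin 2) (Fin 2) ℤ := !![1, 0; 1, 1]

/-- `betaInt a k` is the product of the first `k` alternating factors
`σ₁^{-a 1} · σ₂^{a 2} · σ₁^{-a 3} ⋯` (indices start at 1), i.e. β(a, 1). -/
noncomputable def betaInt (a : ℕ → ℤ) : ℕ → Matrix (Fin 2) (Fin 2) ℤ
  | 0 => 1
  | k + 1 => betaInt a k *
      (if (k + 1) % 2 = 1 then S1 ^ (-(a (k + 1))) else S2 ^ (a (k + 1)))

/-- `a` (on indices 1,…,2n) is an even continued form: either `a₁ ≥ 0` and `aᵢ ≥ 1` for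
`2 ≤ i ≤ 2n`, or `a₁ ≤ 0` and `aᵢ ≤ −1` for `2 ≤ i ≤ 2n`. -/
def IsEvenForm (n : ℕ) (a : ℕ → ℤ) : Prop :=
  1 ≤ n ∧ ((0 ≤ a 1 ∧ ∀ i, 2 ≤ i → i ≤ 2 * n → 1 ≤ a i)
    ∨ (a 1 ≤ 0 ∧ ∀ i, 2 ≤ i → i ≤ 2 * n → a i ≤ -1))

/-- Value of the continued fraction `a i + 1/(a (i+1) + 1/(⋯ + 1/(a last)))`. -/
def cfVal (a : ℕ → ℤ) (last i : ℕ) : ℚ :=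
  if last ≤ i then (a i : ℚ)
  else (a i : ℚ) + 1 / cfVal a last (i + 1)
termination_by last - i
decreasing_by omega

/-! ### Auxiliary lemmas -/

lemma S1_det : S1.det = 1 := by simp [S1, Matrix.det_fin_two_of]
lemma S2_det : S2.det = 1 := by simp [S2, Matrix.det_fin_two_of]

lemma S1_inv : S1⁻¹ = !![1, 1; 0, 1] := by
  rw [Matrix.inv_def]; simp [S1, Matrix.det_fin_two_of, Matrix.adjugate_fin_two]

lemma S2_inv : S2⁻¹ = !![1, 0; -1, 1] := by
  rw [Matrix.inv_def]; simp [S2, Matrix.det_fin_two_of, Matrix.adjugate_fin_two]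

lemma S1_zpow (M : ℤ) : S1 ^ M = !![1, -M; 0, 1] := by
  induction M using Int.induction_on with
  | zero => simp [Matrix.one_fin_two]
  | succ n ih =>
      rw [Matrix.zpow_add_one (by rw [S1_det]; exact isUnit_one), ih, S1,
        Matrix.mul_fin_two]
      norm_num
  | pred n ih =>
      rw [show (-(n:ℤ) - 1) = (-(n:ℤ)) - 1 by ring,
        Matrix.zpow_sub_one (by rw [S1_det]; exact isUnit_one), ih, S1_inv,
        Matrix.mul_fin_two]
      norm_num

lemma S2_zpow (M : ℤ) : S2 ^ M = !![1, 0; M, 1] := by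
  induction M using Int.induction_on with
  | zero => simp [Matrix.one_fin_two]
  | succ n ih =>
      rw [Matrix.zpow_add_one (by rw [S2_det]; exact isUnit_one), ih, S2,
        Matrix.mul_fin_two]
      norm_num
  | pred n ih =>
      rw [show (-(n:ℤ) - 1) = (-(n:ℤ)) - 1 by ring,
        Matrix.zpow_sub_one (by rw [S2_det]; exact isUnit_one), ih, S2_inv,
        Matrix.mul_fin_two]
      norm_num
      ring_nf

lemma betaInt_succ (a : ℕ → ℤ) (k : ℕ) : betaInt a (k + 1) = betaInt a k *
    (if (k + 1) % 2 = 1 then S1 ^ (-(a (k + 1))) else S2 ^ (a (k + 1))) := rfl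

lemma betaInt_congr (a b : ℕ → ℤ) (k : ℕ) (h : ∀ i, 1 ≤ i → i ≤ k → a i = b i) :
    betaInt a k = betaInt b k := by
  induction k with
  | zero => rfl
  | succ k ih =>
      rw [betaInt_succ, betaInt_succ, ih (fun i h1 h2 => h i h1 (by omega)),
        h (k+1) (by omega) (by omega)]

lemma betaInt_add_two (a : ℕ → ℤ) (k : ℕ) :
    betaInt a (2 + k) = betaInt a 2 * betaInt (fun i => a (i + 2)) k := by
  induction k with
  | zero => simp [betaInt]
  | succ k ih =>
      rw [show 2 + (k+1) = (2+k) + 1 by omega, betaInt_succ, ih, mul_assoc]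
      congr 1
      rw [betaInt_succ]
      rw [show 2+k+1 = k+1+2 by omega, show (k+1+2) % 2 = (k+1) % 2 by omega]

lemma betaInt_two (a : ℕ → ℤ) :
    betaInt a 2 = !![1 + a 1 * a 2, a 1; a 2, 1] := by
  show (1 * S1 ^ (-(a 1))) * S2 ^ (a 2) = _
  rw [one_mul, S1_zpow, S2_zpow, Matrix.mul_fin_two]
  norm_num

/-- The diagonal sign matrix used for conjugation. -/
def DD : Matrix (Fin 2) (Fin 2) ℤ := !![1, 0; 0, -1]

lemma DD_mul_DD : DD * DD = 1 := by
  rw [DD, Matrix.mul_fin_two, Matrix.one_fin_two]; norm_num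

lemma betaInt_neg (a : ℕ → ℤ) (k : ℕ) :
    betaInt (fun i => -a i) k = DD * betaInt a k * DD := by
  induction k with
  | zero => rw [betaInt, betaInt, mul_one, DD_mul_DD]
  | succ k ih =>
      have key : DD * (if (k+1) % 2 = 1 then S1 ^ (-(-(a (k+1)))) else S2 ^ (-(a (k+1))))
          = (if (k+1) % 2 = 1 then S1 ^ (-(a (k+1))) else S2 ^ (a (k+1))) * DD := by
        split_ifs
        · rw [S1_zpow, S1_zpow, DD, Matrix.mul_fin_two, Matrix.mul_fin_two]; norm_num
        · rw [S2_zpow, S2_zpow, DD, Matrix.mul_fin_two, Matrix.mul_fin_two]; norm_num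
      rw [betaInt_succ, betaInt_succ, ih]
      simp only [mul_assoc]
      rw [key]

lemma S1_zpow_conj (M : ℤ) : S1 ^ (-M) = DD * S1 ^ M * DD := by
  rw [S1_zpow, S1_zpow, DD, Matrix.mul_fin_two, Matrix.mul_fin_two]; norm_num

lemma conj_decomp (a : ℕ → ℤ) (k : ℕ) (M : ℤ) :
    betaInt (fun i => -a i) k * S1 ^ (-M) = DD * (betaInt a k * S1 ^ M) * DD := by
  rw [betaInt_neg, S1_zpow_conj]
  simp only [mul_assoc]
  rw [← mul_assoc DD DD, DD_mul_DD, one_mul]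

lemma fin2_ext {a b c d a' b' c' d' : ℤ} (h1 : a = a') (h2 : b = b') (h3 : c = c')
    (h4 : d = d') : !![a, b; c, d] = !![a', b'; c', d'] := by rw [h1, h2, h3, h4]

lemma smul_one_fin2 (X : Matrix (Fin 2) (Fin 2) ℤ) : (1:ℤ) • X = X := one_smul _ _

lemma neg_one_smul_fin2 (a b c d : ℤ) :
    (-1:ℤ) • !![a, b; c, d] = !![-a, -b; -c, -d] := by
  ext i j
  fin_cases i <;> fin_cases j <;> simp

lemma DD_conj (a b c d : ℤ) : DD * !![a, b; c, d] * DD = !![a, -b; -c, d] := by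
  rw [DD, Matrix.mul_fin_two, Matrix.mul_fin_two]; norm_num

lemma S1S2_pow (M : ℤ) : S1 * S2 * S1 ^ M = !![0, -1; 1, -M + 1] := by
  rw [S1_zpow, S1, S2, Matrix.mul_fin_two, Matrix.mul_fin_two]
  norm_num

/-- Main induction: positive continued-fraction decomposition. -/
lemma lemP (r : ℕ) : ∀ (p q s : ℤ), 1 ≤ p → 1 ≤ (r:ℤ) → p * s - q * r = 1 →
    ∃ (n : ℕ) (a : ℕ → ℤ) (M : ℤ), 1 ≤ n ∧ 0 ≤ a 1 ∧ ((r:ℤ) < p → 1 ≤ a 1) ∧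
      (∀ i, 2 ≤ i → i ≤ 2*n → 1 ≤ a i) ∧
      !![p, q; (r:ℤ), s] = betaInt a (2*n) * S1 ^ M := by
  induction r using Nat.strong_induction_on with
  | _ r IH =>
    intro p q s hp hr hdet
    have hrpos : (0:ℤ) < r := by omega
    have hrne : (r:ℤ) ≠ 0 := by omega
    obtain ⟨a1, ha1def⟩ : ∃ x, x = (p - 1) / (r:ℤ) := ⟨_, rfl⟩
    obtain ⟨p1, hp1def⟩ : ∃ x, x = (p - 1) % (r:ℤ) + 1 := ⟨_, rfl⟩
    have hm0 : 0 ≤ (p-1) % (r:ℤ) := Int.emod_nonneg (p-1) hrne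
    have hmlt : (p-1) % (r:ℤ) < r := Int.emod_lt_of_pos (p-1) hrpos
    have e1 : p1 = p - a1 * r := by
      rw [hp1def, ha1def]; linear_combination Int.mul_ediv_add_emod (p-1) (r:ℤ)
    have hp1a : 1 ≤ p1 := by rw [hp1def]; linarith
    have hp1b : p1 ≤ r := by rw [hp1def]; linarith
    have ha1 : 0 ≤ a1 := by rw [ha1def]; exact Int.ediv_nonneg (by linarith) (by linarith)
    have ha1' : (r:ℤ) < p → 1 ≤ a1 := by
      intro h
      have h1 : (r:ℤ) / r ≤ (p - 1) / r := Int.ediv_le_ediv hrpos (by linarith)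
      rw [Int.ediv_self hrne] at h1
      rw [ha1def]; exact h1
    obtain ⟨q1, hq1def⟩ : ∃ x, x = q - a1 * s := ⟨_, rfl⟩
    obtain ⟨a2, ha2def⟩ : ∃ x, x = (r:ℤ) / p1 := ⟨_, rfl⟩
    obtain ⟨r', hr'def⟩ : ∃ x, x = (r:ℤ) % p1 := ⟨_, rfl⟩
    obtain ⟨s1, hs1def⟩ : ∃ x, x = s - a2 * q1 := ⟨_, rfl⟩
    have hp1pos : 0 < p1 := by linarith
    have hp1ne : p1 ≠ 0 := by linarith
    have e2 : r' = r - a2 * p1 := by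
      rw [hr'def, ha2def]; linear_combination Int.mul_ediv_add_emod (r:ℤ) p1
    have hr'0 : 0 ≤ r' := by rw [hr'def]; exact Int.emod_nonneg _ hp1ne
    have hr'lt : r' < p1 := by rw [hr'def]; exact Int.emod_lt_of_pos _ hp1pos
    have ha2 : 1 ≤ a2 := by
      have h1 : p1 / p1 ≤ (r:ℤ) / p1 := Int.ediv_le_ediv hp1pos hp1b
      rw [Int.ediv_self hp1ne] at h1
      rw [ha2def]; exact h1
    have hdet2 : p1 * s1 - q1 * r' = 1 := by
      linear_combination hdet + p1*hs1def - q1*e2 + s*e1 - (r:ℤ)*hq1def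
    have hmat : !![p, q; (r:ℤ), s] = !![1 + a1*a2, a1; a2, 1] * !![p1, q1; r', s1] := by
      rw [Matrix.mul_fin_two]
      exact fin2_ext (by linear_combination -e1 - a1*e2)
        (by linear_combination -hq1def - a1*hs1def)
        (by linear_combination -e2) (by linear_combination -hs1def)
    rcases eq_or_lt_of_le hr'0 with hz | hr'pos
    · -- base case: r' = 0
      have hps : p1 * s1 = 1 := by rw [← hdet2, ← hz]; ring
      have hp1one : p1 = 1 := Int.eq_one_of_mul_eq_one_right (by linarith) hps
      have hs1one : s1 = 1 := by rw [hp1one, one_mul] at hps; exact hps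
      refine ⟨1, fun i => match i with | 1 => a1 | 2 => a2 | _ => 0, -q1,
        le_refl 1, ha1, ha1', ?_, ?_⟩
      · intro i h2 h2n
        have : i = 2 := by omega
        subst this; exact ha2
      · rw [show 2*1 = 2 from rfl, betaInt_two]
        show _ = !![1 + a1 * a2, a1; a2, 1] * S1 ^ (-q1)
        rw [S1_zpow, Matrix.mul_fin_two]
        exact fin2_ext
          (by linear_combination -e1 + (1 + a1*a2)*hp1one - a1*e2 - a1*hz)
          (by linear_combination -hq1def - a1*hs1def + a1*hs1one)
          (by linear_combination -e2 - hz + a2*hp1one)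
          (by linear_combination -hs1def + hs1one)
    · -- recursive case
      have hrnlt : r'.toNat < r := by omega
      have hrn : ((r'.toNat : ℤ)) = r' := Int.toNat_of_nonneg hr'0
      obtain ⟨n', a', M, hn', ha'0, ha'1, ha'i, hmat'⟩ :=
        IH r'.toNat hrnlt p1 q1 s1 hp1a (by omega) (by rw [hrn]; exact hdet2)
      rw [hrn] at hmat'
      have ha'one : 1 ≤ a' 1 := ha'1 (by omega)
      refine ⟨n' + 1,
        fun i => match i with | 0 => 0 | 1 => a1 | 2 => a2 | (j+3) => a' (j+1), M,
        by omega, ha1, ha1', ?_, ?_⟩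
      · intro i h2 h2n
        rcases i with _|_|_|j
        · omega
        · omega
        · exact ha2
        · show 1 ≤ a' (j+1)
          rcases Nat.lt_or_ge (j+1) 2 with h | h
          · rw [show j + 1 = 1 by omega]; exact ha'one
          · exact ha'i (j+1) h (by omega)
      · rw [show 2*(n'+1) = 2 + 2*n' by ring, betaInt_add_two, betaInt_two,
          betaInt_congr (fun i => (fun i => match i with
              | 0 => 0 | 1 => a1 | 2 => a2 | (j+3) => a' (j+1)) (i + 2)) a' (2*n')
            (fun i h1 h2 => by
              match i, h1 with
              | (j+1), _ => rfl),
          hmat, hmat', mul_assoc]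

/-- Integer-indexed version of `lemP`. -/
lemma lemP' (p q r s : ℤ) (hp : 1 ≤ p) (hr : 1 ≤ r) (hdet : p * s - q * r = 1) :
    ∃ (n : ℕ) (a : ℕ → ℤ) (M : ℤ), 1 ≤ n ∧ 0 ≤ a 1 ∧
      (∀ i, 2 ≤ i → i ≤ 2*n → 1 ≤ a i) ∧
      !![p, q; r, s] = betaInt a (2*n) * S1 ^ M := by
  have hrn : ((r.toNat : ℤ)) = r := Int.toNat_of_nonneg (by omega)
  obtain ⟨n, a, M, hn, ha0, _, hai, hmat⟩ :=
    lemP r.toNat p q s hp (by omega) (by rw [hrn]; exact hdet)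
  rw [hrn] at hmat
  exact ⟨n, a, M, hn, ha0, hai, hmat⟩

/-- continued normal form in SL₂(ℤ): every A ∈ SL₂(ℤ) can be written,
for some sign ε ∈ {+1, −1} and integer M, as either ε·σ₁^M, or ε·σ₁·σ₂·σ₁^M, or
ε·β(a, 1)·σ₁^M for some even continued form a. -/
theorem continued_normal_form (A : Matrix (Fin 2) (Fin 2) ℤ) (hA : A.det = 1) :
    ∃ (ε : ℤ) (M : ℤ), (ε = 1 ∨ ε = -1) ∧
      (A = ε • (S1 ^ M) ∨
       A = ε • (S1 * S2 * S1 ^ M) ∨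
       ∃ (n : ℕ) (a : ℕ → ℤ), IsEvenForm n a ∧ A = ε • (betaInt a (2 * n) * S1 ^ M)) := by
  obtain ⟨p, q, r, s, hAe⟩ : ∃ p q r s, A = !![p, q; r, s] :=
    ⟨A 0 0, A 0 1, A 1 0, A 1 1, Matrix.eta_fin_two A⟩
  have hdet : p * s - q * r = 1 := by
    rw [hAe, Matrix.det_fin_two_of] at hA; linarith
  rcases lt_trichotomy r 0 with hrneg | hrz | hrpos
  · -- r < 0
    rcases lt_trichotomy p 0 with hpneg | hpz | hppos
    · -- p < 0 : ε = -1, positive form via -A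
      obtain ⟨n, a, M, hn, ha0, hai, hmat⟩ :=
        lemP' (-p) (-q) (-r) (-s) (by omega) (by omega) (by linear_combination hdet)
      refine ⟨-1, M, Or.inr rfl, Or.inr (Or.inr ⟨n, a, ⟨hn, Or.inl ⟨ha0, hai⟩⟩, ?_⟩)⟩
      rw [← hmat, hAe]
      ext i j; fin_cases i <;> fin_cases j <;> simp
    · -- p = 0 : form (ii), ε = -1
      subst hpz
      have hq : q * r = -1 := by linarith
      have hr1 : r = -1 := by
        have h1 : q * r = -1 := hq
        have h2 : (-r) * q = 1 := by linarith [h1]; 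
        have := Int.eq_one_of_mul_eq_one_right (by omega : (0:ℤ) ≤ -r) h2
        omega
      have hq1 : q = 1 := by rw [hr1] at hq; omega
      subst hr1; subst hq1
      refine ⟨-1, 1 + s, Or.inr rfl, Or.inr (Or.inl ?_)⟩
      rw [hAe, S1S2_pow, neg_one_smul_fin2]
      norm_num
    · -- p > 0 : ε = 1, negative form via DD-conjugate
      obtain ⟨n, a, M, hn, ha0, hai, hmat⟩ :=
        lemP' p (-q) (-r) s (by omega) (by omega) (by linear_combination hdet)
      refine ⟨1, -M, Or.inl rfl, Or.inr (Or.inr ⟨n, fun i => -a i,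
        ⟨hn, Or.inr ⟨show -a 1 ≤ 0 by omega, fun i h2 h2n =>
          show -a i ≤ -1 by have := hai i h2 (by omega); omega⟩⟩, ?_⟩)⟩
      rw [smul_one_fin2, show 2*n = 2*n from rfl, conj_decomp, ← hmat, DD_conj, hAe]
      norm_num
  · -- r = 0
    subst hrz
    have hps : p * s = 1 := by linarith
    rcases Int.mul_eq_one_iff_eq_one_or_neg_one.mp hps with ⟨hp1, hs1⟩ | ⟨hp1, hs1⟩
    · subst hp1; subst hs1
      refine ⟨1, -q, Or.inl rfl, Or.inl ?_⟩
      rw [hAe, smul_one_fin2, S1_zpow]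
      norm_num
    · subst hp1; subst hs1
      refine ⟨-1, q, Or.inr rfl, Or.inl ?_⟩
      rw [hAe, S1_zpow, neg_one_smul_fin2]
      norm_num
  · -- r > 0
    rcases lt_trichotomy p 0 with hpneg | hpz | hppos
    · -- p < 0 : ε = -1, negative form
      obtain ⟨n, a, M, hn, ha0, hai, hmat⟩ :=
        lemP' (-p) q r (-s) (by omega) (by omega) (by linear_combination hdet)
      refine ⟨-1, -M, Or.inr rfl, Or.inr (Or.inr ⟨n, fun i => -a i,
        ⟨hn, Or.inr ⟨show -a 1 ≤ 0 by omega, fun i h2 h2n =>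
          show -a i ≤ -1 by have := hai i h2 (by omega); omega⟩⟩, ?_⟩)⟩
      rw [conj_decomp, ← hmat, DD_conj, hAe, neg_one_smul_fin2]
      norm_num
    · -- p = 0 : form (ii), ε = 1
      subst hpz
      have hq : q * r = -1 := by linarith
      have hr1 : r = 1 := by
        have h2 : r * (-q) = 1 := by linarith
        exact Int.eq_one_of_mul_eq_one_right (by omega) h2
      have hq1 : q = -1 := by rw [hr1] at hq; omega
      subst hr1; subst hq1
      refine ⟨1, 1 - s, Or.inl rfl, Or.inr (Or.inl ?_)⟩
      rw [hAe, smul_one_fin2, S1S2_pow]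
      norm_num
    · -- p > 0 : ε = 1, positive form
      obtain ⟨n, a, M, hn, ha0, hai, hmat⟩ :=
        lemP' p q r s (by omega) (by omega) hdet
      exact ⟨1, M, Or.inl rfl, Or.inr (Or.inr ⟨n, a, ⟨hn, Or.inl ⟨ha0, hai⟩⟩,
        by rw [hAe, smul_one_fin2, hmat]⟩)⟩
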